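/- Let $\lambda \in (0,1]$, let $\Gamma_k \in \mathbb{R}^{n_\theta \times n_\theta}$ be symmetric positive definite, $w_k \in \mathbb{R}^{n_x \times n_\theta}$, and set $\Gamma_{k+1} = \lambda \Gamma_k + w_k^\top w_k$. Suppose $\tilde{\theta}_{k+1} = \lambda \Gamma_{k+1}^{-1} \Gamma_k \tilde{\theta}_k$ for some $\tilde{\theta}_k \in \mathbb{R}^{n_\theta}$. Then the Lyapunov function of the estimation error is non-increasing with rate $\lambda$: $\tilde{\theta}_{k+1}^\top \Gamma_{k+1} \tilde{\theta}_{k+1} \leq \lambda\, \tilde{\theta}_k^\top \Gamma_k \tilde{\theta}_k$. -/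

import Mathlib

open Matrix

/-- The Lyapunov function `θ̃ᵀ Γ θ̃` of the RLS estimation error is
non-increasing with rate `λ`. -/
theorem rls_lyapunov_decrease
    {nx nθ : ℕ}
    (lam : ℝ) (hlam0 : 0 < lam) (hlam1 : lam ≤ 1)
    (Γk Γk1 : Matrix (Fin nθ) (Fin nθ) ℝ)
    (hΓk_symm : Γk.IsSymm) (hΓk_pd : Γk.PosDef)
    (wk : Matrix (Fin nx) (Fin nθ) ℝ)
    (hΓk1 : Γk1 = lam • Γk + wkᵀ * wk)
    (θtildek θtildek1 : Fin nθ → ℝ)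
    (hupd : θtildek1 = lam • (Γk1⁻¹ * Γk).mulVec θtildek) :
    θtildek1 ⬝ᵥ Γk1.mulVec θtildek1 ≤ lam * (θtildek ⬝ᵥ Γk.mulVec θtildek) := by
  have hw : (wkᵀ * wk).PosSemidef := by
    have := Matrix.posSemidef_conjTranspose_mul_self wk
    simpa using this
  have hsmul : (lam • Γk).PosDef := by
    refine .of_dotProduct_mulVec_pos ?_ fun x hx => ?_
    · have := hΓk_pd.isHermitian
      simpa [Matrix.IsHermitian] using congrArg (lam • ·) this
    · have h := hΓk_pd.dotProduct_mulVec_pos hx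
      rw [smul_mulVec, dotProduct_smul]
      exact smul_pos hlam0 h
  have hΓ1pd : Γk1.PosDef := by
    rw [hΓk1]; exact hsmul.add_posSemidef hw
  have hdet : IsUnit Γk1.det := isUnit_iff_ne_zero.mpr hΓ1pd.det_pos.ne'
  -- key: Γk1 θ̃_{k+1} = λ Γk θ̃_k
  have hkey : Γk1.mulVec θtildek1 = lam • Γk.mulVec θtildek := by
    rw [hupd, mulVec_smul, mulVec_mulVec, ← Matrix.mul_assoc,
      Matrix.mul_nonsing_inv _ hdet, Matrix.one_mul]
  set u := θtildek
  set v := θtildek1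
  -- symmetry of Γk
  have hsymm : ∀ x y : Fin nθ → ℝ, x ⬝ᵥ Γk.mulVec y = y ⬝ᵥ Γk.mulVec x := by
    intro x y
    rw [dotProduct_mulVec, ← Matrix.mulVec_transpose, hΓk_symm.eq, dotProduct_comm]
  have hb : v ⬝ᵥ Γk1.mulVec v = lam * (u ⬝ᵥ Γk.mulVec v) := by
    rw [hkey, dotProduct_smul, smul_eq_mul, hsymm]
  -- expansion of Γk1
  have hexp : v ⬝ᵥ Γk1.mulVec v
      = lam * (v ⬝ᵥ Γk.mulVec v) + v ⬝ᵥ (wkᵀ * wk).mulVec v := by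
    rw [hΓk1, Matrix.add_mulVec, dotProduct_add, smul_mulVec, dotProduct_smul,
      smul_eq_mul]
  -- nonnegativity facts
  have hs : 0 ≤ v ⬝ᵥ (wkᵀ * wk).mulVec v := by
    have := hw.re_dotProduct_nonneg v
    simpa using this
  have hq : 0 ≤ (u - v) ⬝ᵥ Γk.mulVec (u - v) := by
    have := hΓk_pd.posSemidef.re_dotProduct_nonneg (u - v)
    simpa using this
  have hqexp : (u - v) ⬝ᵥ Γk.mulVec (u - v)
      = u ⬝ᵥ Γk.mulVec u - 2 * (u ⬝ᵥ Γk.mulVec v) + v ⬝ᵥ Γk.mulVec v := by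
    have h1 := hsymm v u
    simp only [Matrix.mulVec_sub, sub_dotProduct, dotProduct_sub] at *
    linarith
  set a := u ⬝ᵥ Γk.mulVec u
  set b := u ⬝ᵥ Γk.mulVec v
  set c := v ⬝ᵥ Γk.mulVec v
  set s := v ⬝ᵥ (wkᵀ * wk).mulVec v
  -- from hb and hexp : lam * c + s = lam * b, so c ≤ b; from hq : a - 2b + c ≥ 0 so b ≤ a
  rw [hqexp] at hq
  have hcb : c ≤ b := by nlinarith [hexp.symm.trans hb]
  have hba : b ≤ a := by linarith
  calc v ⬝ᵥ Γk1.mulVec v = lam * b := hb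
    _ ≤ lam * a := by nlinarith
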